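/- Let 𝔽 be a field, X, Y, Z finite sets, α a corelation from X to Y, and β a corelation from Y to Z. Then for all φ_X : X → 𝔽 and φ_Z : Z → 𝔽, the function [φ_X, φ_Z] : X + Z → 𝔽 is constant on each equivalence class of the composite corelation β∘α if and only if there exists φ_Y : Y → 𝔽 such that [φ_X, φ_Y] : X + Y → 𝔽 is constant on each equivalence class of α and [φ_Y, φ_Z] : Y + Z → 𝔽 is constant on each equivalence class of β. (This is the compositionality of the potential functor Φ: Φ(β∘α) = Φ(β)∘Φ(α) as linear relations.) -/

import Mathlib

/-- The composite of a corelation `α` from `X` to `Y` (an equivalence relation on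
`X ⊕ Y`) and a corelation `β` from `Y` to `Z`: take the smallest equivalence relation on
`X ⊕ Y ⊕ Z` containing the images of `α` and `β`, and restrict it to `X ⊕ Z`. -/
def corelComp {X Y Z : Type*} (α : X ⊕ Y → X ⊕ Y → Prop) (β : Y ⊕ Z → Y ⊕ Z → Prop) :
    X ⊕ Z → X ⊕ Z → Prop := fun a b =>
  Relation.EqvGen
    (fun u v : X ⊕ (Y ⊕ Z) =>
      (∃ p q : X ⊕ Y, α p q ∧ u = Sum.map id Sum.inl p ∧ v = Sum.map id Sum.inl q) ∨
      (∃ p q : Y ⊕ Z, β p q ∧ u = Sum.inr p ∧ v = Sum.inr q))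
    (Sum.map id Sum.inr a) (Sum.map id Sum.inr b)

/-- Compositionality of the potential functor `Φ`: the pair
`(φ_X, φ_Z)` is constant on each equivalence class of the composite corelation `β∘α` if
and only if there is `φ_Y` making `(φ_X, φ_Y)` constant on classes of `α` and
`(φ_Y, φ_Z)` constant on classes of `β`. -/
theorem statement17 {F : Type*} [Field F] {X Y Z : Type*}
    [Fintype X] [Fintype Y] [Fintype Z]
    (α : X ⊕ Y → X ⊕ Y → Prop) (hα : Equivalence α)
    (β : Y ⊕ Z → Y ⊕ Z → Prop) (hβ : Equivalence β)
    (φX : X → F) (φZ : Z → F) :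
    (∀ a b : X ⊕ Z, corelComp α β a b → Sum.elim φX φZ a = Sum.elim φX φZ b) ↔
      ∃ φY : Y → F,
        (∀ p q : X ⊕ Y, α p q → Sum.elim φX φY p = Sum.elim φX φY q) ∧
        (∀ p q : Y ⊕ Z, β p q → Sum.elim φY φZ p = Sum.elim φY φZ q) := by
  classical
  set R : X ⊕ (Y ⊕ Z) → X ⊕ (Y ⊕ Z) → Prop := fun u v =>
      (∃ p q : X ⊕ Y, α p q ∧ u = Sum.map id Sum.inl p ∧ v = Sum.map id Sum.inl q) ∨
      (∃ p q : Y ⊕ Z, β p q ∧ u = Sum.inr p ∧ v = Sum.inr q) with hR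
  constructor
  · intro h
    -- define value on classes of EqvGen R
    set e : X ⊕ (Y ⊕ Z) → F := fun u =>
      if hu : ∃ w : X ⊕ Z, Relation.EqvGen R (Sum.map id Sum.inr w) u then
        Sum.elim φX φZ hu.choose else 0 with he
    have key : ∀ u v, Relation.EqvGen R u v → e u = e v := by
      intro u v huv
      by_cases hu : ∃ w : X ⊕ Z, Relation.EqvGen R (Sum.map id Sum.inr w) u
      · have hv : ∃ w : X ⊕ Z, Relation.EqvGen R (Sum.map id Sum.inr w) v :=
          ⟨hu.choose, hu.choose_spec.trans _ _ _ huv⟩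
        have : corelComp α β hu.choose hv.choose := by
          unfold corelComp
          rw [← hR]
          exact (hu.choose_spec.trans _ _ _ huv).trans _ _ _ (hv.choose_spec.symm _ _)
        simp only [he, dif_pos hu, dif_pos hv]
        exact h _ _ this
      · have hv : ¬ ∃ w : X ⊕ Z, Relation.EqvGen R (Sum.map id Sum.inr w) v := by
          rintro ⟨w, hw⟩
          exact hu ⟨w, hw.trans _ _ _ (huv.symm _ _)⟩
        simp only [he, dif_neg hu, dif_neg hv]
    have eval : ∀ w : X ⊕ Z, e (Sum.map id Sum.inr w) = Sum.elim φX φZ w := by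
      intro w
      have hw : ∃ w' : X ⊕ Z, Relation.EqvGen R (Sum.map id Sum.inr w')
          (Sum.map id Sum.inr w) := ⟨w, Relation.EqvGen.refl _⟩
      have : corelComp α β hw.choose w := by
        unfold corelComp; rw [← hR]; exact hw.choose_spec
      simp only [he, dif_pos hw]
      exact h _ _ this
    refine ⟨fun y => e (Sum.inr (Sum.inl y)), ?_, ?_⟩
    · intro p q hpq
      have h1 : ∀ p : X ⊕ Y, Sum.elim φX (fun y => e (Sum.inr (Sum.inl y))) p
          = e (Sum.map id Sum.inl p) := by
        rintro (x | y)
        · exact (eval (Sum.inl x)).symm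
        · rfl
      rw [h1, h1]
      exact key _ _ (Relation.EqvGen.rel _ _ (Or.inl ⟨p, q, hpq, rfl, rfl⟩))
    · intro p q hpq
      have h2 : ∀ p : Y ⊕ Z, Sum.elim (fun y => e (Sum.inr (Sum.inl y))) φZ p
          = e (Sum.inr p) := by
        rintro (y | z)
        · rfl
        · exact (eval (Sum.inr z)).symm
      rw [h2, h2]
      exact key _ _ (Relation.EqvGen.rel _ _ (Or.inr ⟨p, q, hpq, rfl, rfl⟩))
  · rintro ⟨φY, h1, h2⟩ a b hab
    set ψ : X ⊕ (Y ⊕ Z) → F := Sum.elim φX (Sum.elim φY φZ) with hψ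
    have base : ∀ u v, R u v → ψ u = ψ v := by
      rintro u v (⟨p, q, hpq, rfl, rfl⟩ | ⟨p, q, hpq, rfl, rfl⟩)
      · have h1' := h1 p q hpq
        rcases p with x | y <;> rcases q with x' | y' <;> simpa [hψ] using h1'
      · exact h2 p q hpq
    have key : ∀ u v, Relation.EqvGen R u v → ψ u = ψ v := by
      intro u v huv
      induction huv with
      | rel _ _ h => exact base _ _ h
      | refl => rfl
      | symm _ _ _ ih => exact ih.symm
      | trans _ _ _ _ _ ih1 ih2 => exact ih1.trans ih2
    have : ψ (Sum.map id Sum.inr a) = ψ (Sum.map id Sum.inr b) := key _ _ hab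
    have hev : ∀ w : X ⊕ Z, ψ (Sum.map id Sum.inr w) = Sum.elim φX φZ w := by
      rintro (x | z) <;> rfl
    rw [hev, hev] at this
    exact this
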